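/- Let 0 < |q| < 1 and define δ(x,z) := Φ(xz)Φ(q(xz)^{-1}) / (Φ(x)Φ(qx^{-1})Φ(z)Φ(qz^{-1})) for nonzero complex x, z. Let m, n be positive integers, σ : {1,…,n} → {1,…,m}, let a_1,…,a_n, ħ and ζ_1,…,ζ_{m-1} be nonzero complex numbers, set d_l := #{j : σ(j) ≤ l} and ℒ_l := ħ^{(l−m)d_l}·∏_{j: σ(j)≤l} a_j, and define δ_f := ∏_{l=1}^{m-1} δ(ℒ_l, ζ_l). Then for every i ∈ {1,…,n}, replacing a_i by q a_i multiplies δ_f by ∏_{l=σ(i)}^{m-1} ζ_l^{-1}, i.e. δ_f(a_1,…,q a_i,…,a_n) = (∏_{l=σ(i)}^{m-1} ζ_l^{-1}) · δ_f(a_1,…,a_n), whenever both sides are defined. -/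

import Mathlib

open Complex Finset in
lemma multipliable_aux {q : ℂ} (x : ℂ) (hq : ‖q‖ < 1) :
    Multipliable (fun i : ℕ => 1 - x * q ^ i) := by
  by_cases hz : ∃ i, 1 - x * q ^ i = 0
  · obtain ⟨i0, hi0⟩ := hz
    refine ⟨0, ?_⟩
    rw [HasProd]
    refine tendsto_const_nhds.congr' ?_
    filter_upwards [Filter.eventually_ge_atTop ({i0} : Finset ℕ)] with s hs
    exact (Finset.prod_eq_zero (hs (Finset.mem_singleton_self i0)) hi0).symm
  · push_neg at hz
    refine Complex.multipliable_of_summable_log (f := fun n => 1 - x * q ^ n) ?_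
    have hev : ∀ᶠ n : ℕ in Filter.atTop, ‖x * q ^ n‖ ≤ 1 / 2 := by
      have ht : Filter.Tendsto (fun n : ℕ => ‖x * q ^ n‖) Filter.atTop (nhds 0) := by
        have : Filter.Tendsto (fun n : ℕ => q ^ n) Filter.atTop (nhds 0) :=
          tendsto_pow_atTop_nhds_zero_of_norm_lt_one (by simpa using hq)
        simpa using ((this.const_mul x).norm)
      exact ht.eventually_le_const (by norm_num)
    refine Summable.of_norm_bounded_eventually_nat
      (g := fun n => 3 / 2 * (‖x‖ * ‖q‖ ^ n)) ?_ ?_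
    · exact ((summable_geometric_of_lt_one (norm_nonneg q)
        (by simpa using hq)).mul_left ‖x‖).mul_left _
    · filter_upwards [hev] with n hn
      have : (1 : ℂ) - x * q ^ n = 1 + (-(x * q ^ n)) := by ring
      rw [this]
      calc ‖Complex.log (1 + -(x * q ^ n))‖ ≤ 3 / 2 * ‖-(x * q ^ n)‖ :=
            Complex.norm_log_one_add_half_le_self (by simpa using hn)
        _ = 3 / 2 * (‖x‖ * ‖q‖ ^ n) := by simp [norm_mul]


/-- `Φ(x) = ∏_{i≥0} (1 - x qⁱ)`. -/
noncomputable def Phi (q x : ℂ) : ℂ := ∏' i : ℕ, (1 - x * q ^ i)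

/-- `δ(x,z) = Φ(xz)Φ(q(xz)⁻¹) / (Φ(x)Φ(qx⁻¹)Φ(z)Φ(qz⁻¹))`. -/
noncomputable def deltaFn (q x z : ℂ) : ℂ :=
  Phi q (x * z) * Phi q (q * (x * z)⁻¹) /
    (Phi q x * Phi q (q * x⁻¹) * Phi q z * Phi q (q * z⁻¹))


set_option maxHeartbeats 1000000 in
lemma Phi_shift {q : ℂ} (x : ℂ) (hq : ‖q‖ < 1) :
    Phi q x = (1 - x) * Phi q (q * x) := by
  have hmul : Multipliable (fun n : ℕ => 1 - x * q ^ (n + 1)) := by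
    have := multipliable_aux (q := q) (q * x) hq
    refine this.congr fun n => ?_
    ring
  unfold Phi
  rw [tprod_eq_zero_mul' hmul]
  congr 1
  · simp
  · exact tprod_congr fun n => by ring

lemma deltaFn_shift {q x z : ℂ} (hq : ‖q‖ < 1) (hq0 : q ≠ 0)
    (hx : x ≠ 0) (hz : z ≠ 0)
    (h1 : Phi q x ≠ 0) (h2 : Phi q (q * x⁻¹) ≠ 0)
    (h3 : Phi q z ≠ 0) (h4 : Phi q (q * z⁻¹) ≠ 0) :
    deltaFn q (q * x) z = z⁻¹ * deltaFn q x z := by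
  have e1 : q * (q * x * z)⁻¹ = (x * z)⁻¹ := by
    field_simp
  have e2 : q * (q * x)⁻¹ = x⁻¹ := by
    field_simp
  have hxz : Phi q (x * z) = (1 - x * z) * Phi q (q * (x * z)) := Phi_shift _ hq
  have hxzi : Phi q ((x * z)⁻¹) = (1 - (x * z)⁻¹) * Phi q (q * (x * z)⁻¹) := Phi_shift _ hq
  have hxe : Phi q x = (1 - x) * Phi q (q * x) := Phi_shift _ hq
  have hxie : Phi q (x⁻¹) = (1 - x⁻¹) * Phi q (q * x⁻¹) := Phi_shift _ hq
  have hx1 : (1 : ℂ) - x ≠ 0 := fun h => h1 (by rw [hxe, h, zero_mul])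
  have hqx : Phi q (q * x) ≠ 0 := fun h => h1 (by rw [hxe, h, mul_zero])
  have hxi1 : (1 : ℂ) - x⁻¹ ≠ 0 := by
    have : (1 : ℂ) - x⁻¹ = -x⁻¹ * (1 - x) := by field_simp; ring
    rw [this]
    exact mul_ne_zero (neg_ne_zero.2 (inv_ne_zero hx)) hx1
  rw [deltaFn, deltaFn, e1, e2, mul_assoc q x z, hxz, hxzi, hxie, hxe]
  rw [mul_div_assoc']
  rw [div_eq_div_iff
    (mul_ne_zero (mul_ne_zero (mul_ne_zero hqx
      (mul_ne_zero hxi1 h2)) h3) h4)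
    (mul_ne_zero (mul_ne_zero (mul_ne_zero
      (mul_ne_zero hx1 hqx) h2) h3) h4)]
  field_simp
  ring

/-- `ℒ_l = ħ^{(l-m)d_l} ∏_{j : σ(j) ≤ l} a_j` where `d_l = #{j : σ(j) ≤ l}`, the restriction
of the determinant of the `l`-th tautological bundle.  Indices are zero-based: the
argument `l ∈ {0,…,m-2}` corresponds to the paper's `l+1`, and `σ j` to `σ(j) = (σ j)+1`. -/
noncomputable def Ldet {m n : ℕ} (h : ℂ) (σ : Fin n → Fin m) (a : Fin n → ℂ) (l : ℕ) : ℂ :=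
  h ^ ((((l : ℤ) + 1) - (m : ℤ)) * ((Finset.univ.filter fun j => (σ j : ℕ) ≤ l).card : ℤ)) *
    ∏ j ∈ Finset.univ.filter (fun j => (σ j : ℕ) ≤ l), a j

/-- `δ_f = ∏_{l=1}^{m-1} δ(ℒ_l, ζ_l)` (zero-based indices). -/
noncomputable def deltaF {m n : ℕ} (q h : ℂ) (σ : Fin n → Fin m) (ζ : ℕ → ℂ)
    (a : Fin n → ℂ) : ℂ :=
  ∏ l ∈ Finset.range (m - 1), deltaFn q (Ldet h σ a l) (ζ l)

/-- Replacing `a_i` by `q a_i` multiplies `δ_f` by `∏_{l=σ(i)}^{m-1} ζ_l⁻¹`. -/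
theorem deltaF_qshift {m n : ℕ} (hm : 0 < m) (hn : 0 < n) (σ : Fin n → Fin m)
    (q h : ℂ) (a : Fin n → ℂ) (ζ : ℕ → ℂ) (i : Fin n)
    (hq0 : q ≠ 0) (hh0 : h ≠ 0) (ha : ∀ j, a j ≠ 0) (hζ : ∀ l < m - 1, ζ l ≠ 0)
    (hq1 : 0 < ‖q‖) (hq2 : ‖q‖ < 1)
    (hdef : ∀ A ∈ ({a, Function.update a i (q * a i)} : Set (Fin n → ℂ)), ∀ l < m - 1,
      Phi q (Ldet h σ A l) ≠ 0 ∧ Phi q (q * (Ldet h σ A l)⁻¹) ≠ 0 ∧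
        Phi q (ζ l) ≠ 0 ∧ Phi q (q * (ζ l)⁻¹) ≠ 0) :
    deltaF q h σ ζ (Function.update a i (q * a i)) =
      (∏ l ∈ Finset.Ico ((σ i : ℕ)) (m - 1), (ζ l)⁻¹) * deltaF q h σ ζ a := by
  set a' := Function.update a i (q * a i) with ha'
  have hLne : ∀ l, Ldet h σ a l ≠ 0 := fun l =>
    mul_ne_zero (zpow_ne_zero _ hh0) (Finset.prod_ne_zero_iff.2 fun j _ => ha j)
  have hL_lt : ∀ l, l < (σ i : ℕ) → Ldet h σ a' l = Ldet h σ a l := by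
    intro l hl
    unfold Ldet
    congr 1
    refine Finset.prod_congr rfl fun j hj => ?_
    have hji : j ≠ i := by
      rintro rfl
      simp only [Finset.mem_filter, Finset.mem_univ, true_and] at hj
      omega
    simp [ha', Function.update_of_ne hji]
  have hL_ge : ∀ l, (σ i : ℕ) ≤ l → Ldet h σ a' l = q * Ldet h σ a l := by
    intro l hl
    unfold Ldet
    have hi : i ∈ Finset.univ.filter (fun j => (σ j : ℕ) ≤ l) := by
      simp [hl]
    rw [ha', Finset.prod_update_of_mem hi, ← Finset.erase_eq,
      ← Finset.mul_prod_erase _ a hi]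
    ring
  have hsil : (σ i : ℕ) ≤ m - 1 := by
    have := (σ i).isLt; omega
  have hstep : ∀ l ∈ Finset.Ico ((σ i : ℕ)) (m - 1),
      deltaFn q (Ldet h σ a' l) (ζ l) = (ζ l)⁻¹ * deltaFn q (Ldet h σ a l) (ζ l) := by
    intro l hl
    rw [Finset.mem_Ico] at hl
    obtain ⟨h1, h2, h3, h4⟩ := hdef a (Set.mem_insert _ _) l hl.2
    rw [hL_ge l hl.1]
    exact deltaFn_shift hq2 hq0 (hLne l) (hζ l hl.2) h1 h2 h3 h4
  calc deltaF q h σ ζ a'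
      = (∏ l ∈ Finset.Ico 0 ((σ i : ℕ)), deltaFn q (Ldet h σ a' l) (ζ l)) *
        ∏ l ∈ Finset.Ico ((σ i : ℕ)) (m - 1), deltaFn q (Ldet h σ a' l) (ζ l) := by
        rw [deltaF, Finset.range_eq_Ico,
          ← Finset.prod_Ico_consecutive _ (Nat.zero_le _) hsil]
    _ = (∏ l ∈ Finset.Ico 0 ((σ i : ℕ)), deltaFn q (Ldet h σ a l) (ζ l)) *
        ∏ l ∈ Finset.Ico ((σ i : ℕ)) (m - 1),
          ((ζ l)⁻¹ * deltaFn q (Ldet h σ a l) (ζ l)) := by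
        refine congrArg₂ (· * ·) ?_ (Finset.prod_congr rfl hstep)
        refine Finset.prod_congr rfl fun l hl => ?_
        rw [Finset.mem_Ico] at hl
        rw [hL_lt l hl.2]
    _ = (∏ l ∈ Finset.Ico ((σ i : ℕ)) (m - 1), (ζ l)⁻¹) * deltaF q h σ ζ a := by
        rw [Finset.prod_mul_distrib, deltaF, Finset.range_eq_Ico,
          ← Finset.prod_Ico_consecutive _ (Nat.zero_le ((σ i : ℕ))) hsil]
        ring
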